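/- Let G=(V,A) be a directed graph with distinguished nodes s,t such that the set Φ of simple s–t paths is nonempty, let X ∈ Φ, let k ≥ 0 be an integer, and let Φ(X,k) be any one of the three neighborhoods Φ^incl(X,k), Φ^excl(X,k), Φ^sym(X,k). Let ĉ_e ≥ 0, Δ_e ≥ 0 (e ∈ A) and budget Γ define the uncertainty set U(Γ), and let v* := max_{c∈U(Γ)} min_{Y∈Φ(X,k)} ∑_{e∈Y} c_e be the adversarial value of X. Define first-stage costs C_e := 0 for e ∈ X and C_e := M for e ∉ X, where M > v*. Then min over X' ∈ Φ of ( ∑_{e∈X'} C_e + max_{c∈U(Γ)} min_{Y∈Φ(X',k)} ∑_{e∈Y} c_e ) = v*, and the minimum is attained at X' = X. Hence the adversarial problem Adv SP is a special case of the recoverable robust problem Rec Rob SP. -/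

import Mathlib

namespace RRSP1

/-- A simple directed `s`–`t` path in the digraph with arc set `A`, given as the
list of its (pairwise distinct) vertices. -/
def IsPath {V : Type*} (A : Set (V × V)) (s t : V) (p : List V) : Prop :=
  List.Chain' (fun u v => (u, v) ∈ A) p ∧ p.head? = some s ∧ p.getLast? = some t ∧ p.Nodup

/-- The set of arcs of a path given by its vertex list. -/
def pathArcs {V : Type*} [DecidableEq V] (p : List V) : Finset (V × V) :=
  (p.zip p.tail).toFinset

/-- `Φ`: the set of all simple `s`–`t` paths, each identified with its arc set. -/
def Phi {V : Type*} [DecidableEq V] (A : Set (V × V)) (s t : V) : Set (Finset (V × V)) :=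
  { X | ∃ p : List V, IsPath A s t p ∧ pathArcs p = X }

/-- The arc inclusion neighborhood `Φ^incl(X,k)`. -/
def PhiIncl {V : Type*} [DecidableEq V] (A : Set (V × V)) (s t : V)
    (X : Finset (V × V)) (k : ℕ) : Set (Finset (V × V)) :=
  { Y ∈ Phi A s t | (Y \ X).card ≤ k }

/-- The arc exclusion neighborhood `Φ^excl(X,k)`. -/
def PhiExcl {V : Type*} [DecidableEq V] (A : Set (V × V)) (s t : V)
    (X : Finset (V × V)) (k : ℕ) : Set (Finset (V × V)) :=
  { Y ∈ Phi A s t | (X \ Y).card ≤ k }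

/-- The arc symmetric difference neighborhood `Φ^sym(X,k)`. -/
def PhiSym {V : Type*} [DecidableEq V] (A : Set (V × V)) (s t : V)
    (X : Finset (V × V)) (k : ℕ) : Set (Finset (V × V)) :=
  { Y ∈ Phi A s t | ((Y \ X) ∪ (X \ Y)).card ≤ k }

/-- The discrete budgeted uncertainty set `U(Γ)` on the arcs of `A`. -/
def U {V : Type*} (A : Set (V × V)) (chat Δ : V × V → ℝ) (Γ : ℕ) :
    Set ((V × V) → ℝ) :=
  { c | (∀ e ∈ A, chat e ≤ c e ∧ c e ≤ chat e + Δ e) ∧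
        { e ∈ A | chat e < c e }.ncard ≤ Γ }

/-- `min_{Y ∈ Nk} ∑_{e ∈ Y} c e`: the incremental value. -/
noncomputable def incVal {V : Type*} (Nk : Set (Finset (V × V))) (c : (V × V) → ℝ) : ℝ :=
  sInf ((fun Y => ∑ e ∈ Y, c e) '' Nk)

/-- `max_{c ∈ U} min_{Y ∈ Nk} ∑_{e ∈ Y} c e`: the adversarial value. -/
noncomputable def advVal {V : Type*} (Nk : Set (Finset (V × V)))
    (U : Set ((V × V) → ℝ)) : ℝ :=
  sSup ((incVal Nk) '' U)



lemma pathArcs_cons_cons {V : Type*} [DecidableEq V] (a b : V) (l : List V) :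
    pathArcs (a :: b :: l) = insert (a, b) (pathArcs (b :: l)) := by
  simp [pathArcs]

lemma fst_mem_of_mem_pathArcs {V : Type*} [DecidableEq V] {p : List V} {e : V × V}
    (h : e ∈ pathArcs p) : e.1 ∈ p := by
  have := List.mem_toFinset.mp h
  rcases e with ⟨a, b⟩
  exact (List.of_mem_zip this).1

lemma mem_A_of_mem_pathArcs {V : Type*} [DecidableEq V] {A : Set (V × V)} {p : List V}
    (hp : List.Chain' (fun u v => (u, v) ∈ A) p) {e : V × V} (h : e ∈ pathArcs p) :
    e ∈ A := by
  induction p with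
  | nil => simp [pathArcs] at h
  | cons a l ih =>
    cases l with
    | nil => simp [pathArcs] at h
    | cons b l' =>
      rw [pathArcs_cons_cons] at h
      rcases List.isChain_cons_cons.mp hp with ⟨hab, htl⟩
      rcases Finset.mem_insert.mp h with h | h
      · subst h; exact hab
      · exact ih htl h

/-- Key combinatorial lemma: a simple path whose arc set is contained in that of
another simple path with the same endpoints equals it. -/
lemma eq_of_pathArcs_subset {V : Type*} [DecidableEq V] :
    ∀ (q p : List V), q.Nodup → p.Nodup → q.head? = p.head? →
      q.getLast? = p.getLast? → pathArcs q ⊆ pathArcs p → q = p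
  | [], p, _, _, hh, _, _ => by
      cases p with
      | nil => rfl
      | cons x xs => simp at hh
  | [a], p, _, hpnd, hh, hl, _ => by
      cases p with
      | nil => simp at hh
      | cons x xs =>
        have hxa : x = a := by simpa using hh.symm
        cases xs with
        | nil => rw [hxa]
        | cons y ys =>
          exfalso
          rw [List.getLast?_cons_cons] at hl
          have hl' : (y :: ys).getLast? = some a := by simpa using hl.symm
          have hmem : a ∈ y :: ys := by
            have hg := List.getLast?_eq_getLast (by simp : (y :: ys) ≠ [])
            rw [hg, Option.some_inj] at hl'
            rw [← hl']
            exact List.getLast_mem _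
          rw [hxa] at hpnd
          exact (List.nodup_cons.mp hpnd).1 hmem
  | a :: b :: q', p, hqnd, hpnd, hh, hl, hsub => by
      cases p with
      | nil => simp at hh
      | cons x xs =>
        have hxa : x = a := by simpa using hh.symm
        rw [hxa] at hpnd hl hsub ⊢
        have hanotq : a ∉ b :: q' := (List.nodup_cons.mp hqnd).1
        have hab : (a, b) ∈ pathArcs (a :: b :: q') := by
          rw [pathArcs_cons_cons]; exact Finset.mem_insert_self _ _
        have habp : (a, b) ∈ pathArcs (a :: xs) := hsub hab
        cases xs with
        | nil => simp [pathArcs] at habp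
        | cons y ys =>
          have hyb : y = b := by
            rw [pathArcs_cons_cons] at habp
            rcases Finset.mem_insert.mp habp with h | h
            · have := h
              rw [Prod.mk.injEq] at this
              exact this.2.symm
            · exfalso
              have : a ∈ y :: ys := fst_mem_of_mem_pathArcs h
              exact (List.nodup_cons.mp hpnd).1 this
          rw [hyb] at hpnd hl hsub ⊢
          have hanotp : a ∉ b :: ys := (List.nodup_cons.mp hpnd).1
          have hsub' : pathArcs (b :: q') ⊆ pathArcs (b :: ys) := by
            intro e he
            have he1 : e ∈ pathArcs (a :: b :: q') := by
              rw [pathArcs_cons_cons]; exact Finset.mem_insert_of_mem he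
            have he2 := hsub he1
            rw [pathArcs_cons_cons] at he2
            rcases Finset.mem_insert.mp he2 with h | h
            · exfalso
              have hmem : e.1 ∈ b :: q' := fst_mem_of_mem_pathArcs he
              rw [h] at hmem
              exact hanotq hmem
            · exact h
          have hrec : b :: q' = b :: ys := by
            apply eq_of_pathArcs_subset (b :: q') (b :: ys)
              (List.nodup_cons.mp hqnd).2 (List.nodup_cons.mp hpnd).2 rfl ?_ hsub'
            rw [List.getLast?_cons_cons] at hl
            rw [hl, List.getLast?_cons_cons]
          rw [hrec]
  termination_by q => q.length

lemma phi_eq_of_subset {V : Type*} [DecidableEq V] {A : Set (V × V)} {s t : V}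
    {X' X : Finset (V × V)} (hX' : X' ∈ Phi A s t) (hX : X ∈ Phi A s t)
    (hsub : X' ⊆ X) : X' = X := by
  obtain ⟨q, ⟨_, hqh, hql, hqnd⟩, rfl⟩ := hX'
  obtain ⟨p, ⟨_, hph, hpl, hpnd⟩, rfl⟩ := hX
  rw [eq_of_pathArcs_subset q p hqnd hpnd (by rw [hqh, hph]) (by rw [hql, hpl]) hsub]

lemma advVal_nonneg {V : Type*} [DecidableEq V] {A : Set (V × V)} {s t : V}
    {Nk : Set (Finset (V × V))} (hNk : Nk ⊆ Phi A s t)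
    (chat Δ : V × V → ℝ) (hchat : ∀ e, 0 ≤ chat e) (Γ : ℕ) :
    0 ≤ advVal Nk (U A chat Δ Γ) := by
  apply Real.sSup_nonneg
  rintro x ⟨c, hc, rfl⟩
  apply Real.sInf_nonneg
  rintro y ⟨Y, hY, rfl⟩
  apply Finset.sum_nonneg
  intro e he
  obtain ⟨p, hp, rfl⟩ := hNk hY
  have heA : e ∈ A := mem_A_of_mem_pathArcs hp.1 he
  exact le_trans (hchat e) (hc.1 e heA).1

lemma N_subset_phi {V : Type*} [DecidableEq V] {A : Set (V × V)} {s t : V} {k : ℕ}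
    {N : Finset (V × V) → Set (Finset (V × V))}
    (hN : N = (fun X' => PhiIncl A s t X' k) ∨
          N = (fun X' => PhiExcl A s t X' k) ∨
          N = (fun X' => PhiSym A s t X' k)) (X' : Finset (V × V)) :
    N X' ⊆ Phi A s t := by
  rcases hN with rfl | rfl | rfl <;> exact fun Y hY => hY.1

/-- Let `X ∈ Φ`, let `N X'` be one of the three neighborhoods
`Φ^incl(X',k)`, `Φ^excl(X',k)`, `Φ^sym(X',k)`, let `v* = advVal (N X) (U (Γ))`
be the adversarial value of `X`, and define first-stage costs `C e = 0` for
`e ∈ X` and `C e = M` otherwise, where `M > v*`.  Then the minimum over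
`X' ∈ Φ` of `∑_{e ∈ X'} C e + max_{c ∈ U(Γ)} min_{Y ∈ N X'} ∑_{e ∈ Y} c e`
equals `v*` and is attained at `X' = X`.  Hence the adversarial problem is a
special case of the recoverable robust problem. -/
theorem stmt1 {V : Type*} [Fintype V] [DecidableEq V]
    (A : Set (V × V)) (s t : V)
    (hΦ : (Phi A s t).Nonempty)
    (X : Finset (V × V)) (hX : X ∈ Phi A s t) (k Γ : ℕ)
    (chat Δ : V × V → ℝ) (hchat : ∀ e, 0 ≤ chat e) (hΔ : ∀ e, 0 ≤ Δ e)
    (N : Finset (V × V) → Set (Finset (V × V)))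
    (hN : N = (fun X' => PhiIncl A s t X' k) ∨
          N = (fun X' => PhiExcl A s t X' k) ∨
          N = (fun X' => PhiSym A s t X' k))
    (M : ℝ) (hM : advVal (N X) (U A chat Δ Γ) < M)
    (C : V × V → ℝ) (hC : C = fun e => if e ∈ X then 0 else M) :
    (∑ e ∈ X, C e) + advVal (N X) (U A chat Δ Γ) = advVal (N X) (U A chat Δ Γ) ∧
    IsLeast ((fun X' => (∑ e ∈ X', C e) + advVal (N X') (U A chat Δ Γ)) '' Phi A s t)
      (advVal (N X) (U A chat Δ Γ)) := by
  have hCe0 : ∀ e ∈ X, C e = 0 := by intro e he; rw [hC]; simp [he]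
  have hCeM : ∀ e, e ∉ X → C e = M := by intro e he; rw [hC]; simp [he]
  have hX0 : (∑ e ∈ X, C e) = 0 := Finset.sum_eq_zero hCe0
  have hv0 : 0 ≤ advVal (N X) (U A chat Δ Γ) :=
    advVal_nonneg (N_subset_phi hN X) chat Δ hchat Γ
  have hM0 : 0 < M := lt_of_le_of_lt hv0 hM
  have hCnn : ∀ e, 0 ≤ C e := by
    intro e
    rw [hC]; dsimp only
    split
    · exact le_refl 0
    · exact le_of_lt hM0
  refine ⟨by rw [hX0, zero_add], ⟨⟨X, hX, by dsimp only; rw [hX0, zero_add]⟩, ?_⟩⟩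
  rintro y ⟨X', hX', rfl⟩
  dsimp only
  by_cases hXX : X' = X
  · subst hXX
    rw [hX0, zero_add]
  · have hns : ¬ X' ⊆ X := fun h => hXX (phi_eq_of_subset hX' hX h)
    obtain ⟨e0, he0, he0'⟩ := Finset.not_subset.mp hns
    have hsum : M ≤ ∑ e ∈ X', C e := by
      have h1 := Finset.single_le_sum (f := C) (fun i _ => hCnn i) he0
      rw [hCeM e0 he0'] at h1
      exact h1
    have hv0' : 0 ≤ advVal (N X') (U A chat Δ Γ) :=
      advVal_nonneg (N_subset_phi hN X') chat Δ hchat Γ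
    linarith

end RRSP1
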